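/- Every set A in the accommodating set 𝔅̄ has the form A = (∪_{i=1}^{n_1} [v_i]_l) ∪ (∪_{j=1}^{n_2} ([u_j]_l)_sk) ∪ (∪_{k=1}^{n_3} ([w_k]_l ∖ ([w_k]_l)_sk)) for some vertices v_i, u_j, w_k ∈ Ω_0(E), some l ≥ 1, and some integers n_1, n_2, n_3 ≥ 0 (where an empty union is ∅). -/

import Mathlib

/-! # Common framework for labeled graph C*-algebras

Directed graphs, finite paths, labeled spaces `(E, L, 𝔅̄)` where `𝔅̄` is the
smallest accommodating set closed under relative complements (and containing
the sink parts of its members), loops and generalized loops, representations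
of labeled spaces in C*-algebras, gauge actions, infinite projections,
AF algebras, and closed two-sided ideals. -/

noncomputable section

/-- A directed graph with vertex set `V` and edge set `E`. -/
structure DirGraph (V : Type*) (E : Type*) where
  src : E → V
  rng : E → V

variable {V E 𝒜 : Type*}

/-- A (finite) path of positive length in a directed graph: a nonempty list of
composable edges. -/
structure GPath (G : DirGraph V E) where
  edges : List E
  ne : edges ≠ []
  chain : edges.Chain' fun e f => G.rng e = G.src f

namespace GPath

variable {G : DirGraph V E}

/-- The source vertex of a path. -/
def source (p : GPath G) : V := G.src (p.edges.head p.ne)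

/-- The range vertex of a path. -/
def range (p : GPath G) : V := G.rng (p.edges.getLast p.ne)

/-- The length of a path. -/
def length (p : GPath G) : ℕ := p.edges.length

/-- The label word of a path under a labeling `L`. -/
def label (L : E → 𝒜) (p : GPath G) : List 𝒜 := p.edges.map L

end GPath

/-- The set of sinks of a graph (vertices emitting no edge). -/
def DirGraph.sinks (G : DirGraph V E) : Set V := {v | ∀ e, G.src e ≠ v}

/-- `w ∈ L*(E)`: `w` is the label of some path of positive length. -/
def IsLabelWord (G : DirGraph V E) (L : E → 𝒜) (w : List 𝒜) : Prop :=
  ∃ p : GPath G, p.label L = w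

/-- The range `r(w)` of a labeled path `w`. -/
def rngW (G : DirGraph V E) (L : E → 𝒜) (w : List 𝒜) : Set V :=
  {v | ∃ p : GPath G, p.label L = w ∧ p.range = v}

/-- The relative range `r(A, w)` of a labeled path `w` with respect to `A`. -/
def relRng (G : DirGraph V E) (L : E → 𝒜) (A : Set V) (w : List 𝒜) : Set V :=
  {v | ∃ p : GPath G, p.label L = w ∧ p.source ∈ A ∧ p.range = v}

/-- `L(A E^n)`: labels of paths of length exactly `n` with source in `A`. -/
def labelsFromLen (G : DirGraph V E) (L : E → 𝒜) (A : Set V) (n : ℕ) : Set (List 𝒜) :=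
  {w | ∃ p : GPath G, p.source ∈ A ∧ p.length = n ∧ p.label L = w}

/-- `L(A E^{≤n})`: labels of paths of length between `1` and `n` with source in `A`. -/
def labelsFromLe (G : DirGraph V E) (L : E → 𝒜) (A : Set V) (n : ℕ) : Set (List 𝒜) :=
  {w | ∃ p : GPath G, p.source ∈ A ∧ p.length ≤ n ∧ p.label L = w}

/-- `L(A E^{≥n})`: labels of paths of length at least `n` (and at least `1`)
with source in `A`. -/
def labelsFromGe (G : DirGraph V E) (L : E → 𝒜) (A : Set V) (n : ℕ) : Set (List 𝒜) :=
  {w | ∃ p : GPath G, p.source ∈ A ∧ n ≤ p.length ∧ p.label L = w}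

/-- `L(E^n A)`: labels of paths of length exactly `n` with range in `A`. -/
def labelsToLen (G : DirGraph V E) (L : E → 𝒜) (n : ℕ) (A : Set V) : Set (List 𝒜) :=
  {w | ∃ p : GPath G, p.range ∈ A ∧ p.length = n ∧ p.label L = w}

/-- `L(E^{≤l} v)`: labels of paths of length between `1` and `l` with range `v`. -/
def labelsToLe (G : DirGraph V E) (L : E → 𝒜) (l : ℕ) (v : V) : Set (List 𝒜) :=
  {w | ∃ p : GPath G, p.range = v ∧ p.length ≤ l ∧ p.label L = w}

/-- `𝔅̄`: the smallest accommodating set for `(E, L)` (containing the ranges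
`r(α)` for `α ∈ L*(E)` and closed under relative ranges, finite intersections
and finite unions) that is moreover closed under relative complements and
contains `A_sk = A ∩ sinks` for every `A` belonging to it. -/
inductive Bbar (G : DirGraph V E) (L : E → 𝒜) : Set V → Prop
  | base (w : List 𝒜) (hw : IsLabelWord G L w) : Bbar G L (rngW G L w)
  | rel (A : Set V) (w : List 𝒜) (hA : Bbar G L A) (hw : IsLabelWord G L w) :
      Bbar G L (relRng G L A w)
  | inter (A B : Set V) (hA : Bbar G L A) (hB : Bbar G L B) : Bbar G L (A ∩ B)
  | union (A B : Set V) (hA : Bbar G L A) (hB : Bbar G L B) : Bbar G L (A ∪ B)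
  | diff (A B : Set V) (hA : Bbar G L A) (hB : Bbar G L B) : Bbar G L (A \ B)
  | sk (A : Set V) (hA : Bbar G L A) : Bbar G L (A ∩ G.sinks)

/-- The standing assumptions on a labeled space `(E, L, 𝔅̄)`: weakly
left-resolving, set-finite, receiver set-finite, and no sink is a source. -/
structure StandingAssumptions (G : DirGraph V E) (L : E → 𝒜) : Prop where
  wlr : ∀ A B : Set V, Bbar G L A → Bbar G L B → ∀ w : List 𝒜, IsLabelWord G L w →
    relRng G L A w ∩ relRng G L B w = relRng G L (A ∩ B) w
  setFinite : ∀ A : Set V, Bbar G L A → ∀ n : ℕ, 1 ≤ n → (labelsFromLen G L A n).Finite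
  receiverSetFinite : ∀ A : Set V, Bbar G L A → ∀ n : ℕ, 1 ≤ n → (labelsToLen G L n A).Finite
  sinkNotSource : ∀ v ∈ G.sinks, ∃ e, G.rng e = v

/-- The `n`-fold concatenation `w^n` of a word `w`. -/
def wordPow (w : List 𝒜) (n : ℕ) : List 𝒜 := (List.replicate n w).flatten

/-- A labeled path is repeatable if all its powers `w^n`, `n ≥ 1`, are again
labeled paths. -/
def Repeatable (G : DirGraph V E) (L : E → 𝒜) (w : List 𝒜) : Prop :=
  ∀ n : ℕ, 1 ≤ n → IsLabelWord G L (wordPow w n)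

/-- The generalized vertex `[v]_l`: all non-source vertices receiving exactly
the same labeled paths of length at most `l` as `v` does. -/
def gvtx (G : DirGraph V E) (L : E → 𝒜) (l : ℕ) (v : V) : Set V :=
  {u | (∃ e, G.rng e = u) ∧ labelsToLe G L l u = labelsToLe G L l v}

/-- A generalized loop at `A`: a labeled path `α ∈ L(A E^{≥1} A)`. -/
def IsGenLoop (G : DirGraph V E) (L : E → 𝒜) (A : Set V) (α : List 𝒜) : Prop :=
  ∃ p : GPath G, p.label L = α ∧ p.source ∈ A ∧ p.range ∈ A

/-- A loop at `A`: a generalized loop `α` at `A` such that `A ⊆ r(A, α)`. -/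
def IsLoop (G : DirGraph V E) (L : E → 𝒜) (A : Set V) (α : List 𝒜) : Prop :=
  IsGenLoop G L A α ∧ A ⊆ relRng G L A α

/-- The nonempty initial segments (initial paths) of a word `α`. -/
def initialSegs (α : List 𝒜) : Set (List 𝒜) := {w | w ≠ [] ∧ w <+: α}

/-- A loop `α` at `A` has an exit if (i) the initial segments of `α` form a
proper subset of `L(A E^{≤|α|})`, or (ii) `r(A, α_{[1,i]})` contains a sink for
some `1 ≤ i ≤ |α|`, or (iii) `A` is a proper subset of `r(A, α)`. -/
def HasExitLoop (G : DirGraph V E) (L : E → 𝒜) (A : Set V) (α : List 𝒜) : Prop :=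
  initialSegs α ⊂ labelsFromLe G L A α.length ∨
  (∃ k : ℕ, 1 ≤ k ∧ k ≤ α.length ∧ (relRng G L A (α.take k) ∩ G.sinks).Nonempty) ∨
  A ⊂ relRng G L A α

/-- `A_0 E^{≤K} A_1 ⋯ E^{≤K} A_m ≠ ∅`: existence of `m` consecutively
composable paths, each of length between `1` and `K`, the `j`-th going from
`As j` to `As (j+1)`. -/
def ChainExists (G : DirGraph V E) (As : ℕ → Set V) (K m : ℕ) : Prop :=
  ∃ xs : Fin m → GPath G,
    (∀ j : Fin m, (xs j).length ≤ K ∧ (xs j).source ∈ As j.val ∧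
      (xs j).range ∈ As (j.val + 1)) ∧
    ∀ (j : ℕ) (h : j + 1 < m),
      (xs ⟨j, Nat.lt_of_succ_lt h⟩).range = (xs ⟨j + 1, h⟩).source

/-- Same as `ChainExists` but with all paths of length exactly `K`
(i.e. `A_0 E^K A_1 ⋯ E^K A_m ≠ ∅`). -/
def ChainExistsExact (G : DirGraph V E) (As : ℕ → Set V) (K m : ℕ) : Prop :=
  ∃ xs : Fin m → GPath G,
    (∀ j : Fin m, (xs j).length = K ∧ (xs j).source ∈ As j.val ∧
      (xs j).range ∈ As (j.val + 1)) ∧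
    ∀ (j : ℕ) (h : j + 1 < m),
      (xs ⟨j, Nat.lt_of_succ_lt h⟩).range = (xs ⟨j + 1, h⟩).source

/-- Condition (a): for every finite family `A_1, …, A_N` in `𝔅̄` and every
`K ≥ 1` there is `m₀ ≥ 1` such that
`A_{i_1} E^{≤K} A_{i_2} ⋯ E^{≤K} A_{i_n} = ∅` (`n` sets, `n - 1` path factors)
for all `n > m₀` and all choices of indices. -/
def CondA (G : DirGraph V E) (L : E → 𝒜) : Prop :=
  ∀ (N : ℕ) (As : Fin N → Set V), (∀ i, Bbar G L (As i)) → ∀ K : ℕ, 1 ≤ K →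
    ∃ m0 : ℕ, 1 ≤ m0 ∧ ∀ n : ℕ, m0 < n → ∀ ι : ℕ → Fin N,
      ¬ ChainExists G (fun j => As (ι j)) K (n - 1)

/-- A word is agreeable (for level `l`) if it is of the form `β^k β'` with
`β, β' ∈ L(E^{≤l})` and `β'` a nonempty initial segment of `β`. -/
def AgreeableW (G : DirGraph V E) (L : E → 𝒜) (l : ℕ) (α : List 𝒜) : Prop :=
  ∃ (k : ℕ) (β β' : List 𝒜), IsLabelWord G L β ∧ IsLabelWord G L β' ∧
    β.length ≤ l ∧ β' ≠ [] ∧ β' <+: β ∧ α = wordPow β k ++ β'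

/-- A representation of the labeled space `(E, L, 𝔅̄)` in a (C*-)algebra `B`:
projections `p A`, `A ∈ 𝔅̄`, and partial isometries `s a`, `a ∈ 𝒜`, satisfying
the defining relations of a labeled graph C*-algebra. -/
structure LRep (G : DirGraph V E) (L : E → 𝒜) (B : Type*)
    [NonUnitalRing B] [StarRing B] where
  p : Set V → B
  s : 𝒜 → B
  p_empty : p ∅ = 0
  p_sa : ∀ A : Set V, Bbar G L A → star (p A) = p A
  p_mul : ∀ A A' : Set V, Bbar G L A → Bbar G L A' → p A * p A' = p (A ∩ A')
  p_union : ∀ A A' : Set V, Bbar G L A → Bbar G L A' →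
    p (A ∪ A') = p A + p A' - p (A ∩ A')
  s_pi : ∀ a : 𝒜, s a * star (s a) * s a = s a
  p_s : ∀ (A : Set V) (a : 𝒜), Bbar G L A → p A * s a = s a * p (relRng G L A [a])
  s_s : ∀ a : 𝒜, star (s a) * s a = p (rngW G L [a])
  s_orth : ∀ a b : 𝒜, a ≠ b → star (s a) * s b = 0
  ck : ∀ A : Set V, Bbar G L A →
    p A = (∑ᶠ a ∈ {a : 𝒜 | ∃ e, G.src e ∈ A ∧ L e = a},
      s a * p (relRng G L A [a]) * star (s a)) + p (A ∩ G.sinks)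

/-- `s_α` for a word `α`: the product of the partial isometries of its letters
(junk value `0` on the empty word, which is never used). -/
def sWord {B : Type*} [NonUnitalRing B] (s : 𝒜 → B) : List 𝒜 → B
  | [] => 0
  | [a] => s a
  | a :: b :: w => s a * sWord s (b :: w)

/-- The range of a word in `L^#(E)` (`none` is the empty word, with range all
of `E^0`). -/
def owordRng (G : DirGraph V E) (L : E → 𝒜) : Option (List 𝒜) → Set V
  | none => Set.univ
  | some w => rngW G L w

/-- The relative range of a word in `L^#(E)` with respect to `A` (`none` is
the empty word, with `r(A, ε) = A`). -/
def relRngE (G : DirGraph V E) (L : E → 𝒜) (A : Set V) : Option (List 𝒜) → Set V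
  | none => A
  | some w => relRng G L A w

/-- The element `s_α p_A s_β*` of a representation, where `α`, `β` are words in
`L^#(E)` (`none` being the empty word `ε` with `s_ε` the identity). -/
def LRep.elt {B : Type*} [NonUnitalRing B] [StarRing B] {G : DirGraph V E} {L : E → 𝒜}
    (rep : LRep G L B) : Option (List 𝒜) → Set V → Option (List 𝒜) → B
  | none, A, none => rep.p A
  | some α, A, none => sWord rep.s α * rep.p A
  | none, A, some β => rep.p A * star (sWord rep.s β)
  | some α, A, some β => sWord rep.s α * rep.p A * star (sWord rep.s β)

/-- A projection `q` is infinite if there is a partial isometry `u` with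
`u* u = q`, `u u* ≤ q` and `u u* ≠ q`. -/
def IsInfiniteProjection (B : Type*) [NonUnitalRing B] [StarRing B] [PartialOrder B]
    (q : B) : Prop :=
  star q = q ∧ q * q = q ∧ ∃ u : B, star u * u = q ∧ u * star u ≤ q ∧ u * star u ≠ q

/-- A C*-algebra is AF if every finite subset can be approximated within any
`ε > 0` from a finite-dimensional *-subalgebra. -/
def IsAFAlgebra (B : Type*) [NonUnitalNormedRing B] [StarRing B] [NormedSpace ℂ B] : Prop :=
  ∀ (F : Finset B) (ε : ℝ), 0 < ε →
    ∃ D : NonUnitalStarSubalgebra ℂ B, FiniteDimensional ℂ D ∧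
      ∀ x ∈ F, ∃ y ∈ (D : Set B), ‖x - y‖ < ε

/-- A gauge action for a representation: a strongly continuous action of the
circle group by *-automorphisms fixing the projections and scaling the
generating partial isometries. -/
structure GaugeAction {B : Type*} [NonUnitalCStarAlgebra B]
    (G : DirGraph V E) (L : E → 𝒜) (rep : LRep G L B) where
  γ : Circle → B ≃⋆ₐ[ℂ] B
  γ_mul : ∀ z w : Circle, γ (z * w) = (γ w).trans (γ z)
  γ_continuous : ∀ x : B, Continuous fun z => γ z x
  γ_s : ∀ (z : Circle) (a : 𝒜), γ z (rep.s a) = (z : ℂ) • rep.s a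
  γ_p : ∀ (z : Circle) (A : Set V), Bbar G L A → γ z (rep.p A) = rep.p A

/-- The representation generates `B` as a C*-algebra. -/
def GeneratesAlg {B : Type*} [NonUnitalCStarAlgebra B]
    (G : DirGraph V E) (L : E → 𝒜) (rep : LRep G L B) : Prop :=
  closure (NonUnitalStarAlgebra.adjoin ℂ
    ({x : B | ∃ a : 𝒜, x = rep.s a} ∪ {x : B | ∃ A : Set V, Bbar G L A ∧ x = rep.p A}) : Set B)
    = Set.univ

/-- A closed two-sided ideal of a C*-algebra (as a set). -/
def IsClosedTwoSidedIdealSet (B : Type*) [NonUnitalNormedRing B] [NormedSpace ℂ B]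
    (I : Set B) : Prop :=
  IsClosed I ∧ (0 : B) ∈ I ∧ (∀ x ∈ I, ∀ y ∈ I, x + y ∈ I) ∧
    (∀ (c : ℂ), ∀ x ∈ I, c • x ∈ I) ∧ ∀ x ∈ I, ∀ y : B, x * y ∈ I ∧ y * x ∈ I

/-- The closed two-sided ideal generated by an element. -/
def closedIdealGen (B : Type*) [NonUnitalNormedRing B] [NormedSpace ℂ B] (q : B) : Set B :=
  ⋂₀ {I : Set B | IsClosedTwoSidedIdealSet B I ∧ q ∈ I}


section BbarDecompAux

variable {V E 𝒜 : Type*} {G : DirGraph V E} {L : E → 𝒜}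

namespace GPath

lemma length_pos (p : GPath G) : 1 ≤ p.length :=
  Nat.one_le_iff_ne_zero.mpr (by simp [GPath.length, p.ne])

lemma label_length (p : GPath G) : (p.label L).length = p.length := by
  simp [GPath.label, GPath.length]

lemma label_ne_nil (p : GPath G) : p.label L ≠ [] := by
  simp [GPath.label, p.ne]

lemma range_isRange (p : GPath G) : ∃ e, G.rng e = p.range :=
  ⟨p.edges.getLast p.ne, rfl⟩

/-- Concatenation of composable paths. -/
def append (p q : GPath G) (h : p.range = q.source) : GPath G where
  edges := p.edges ++ q.edges
  ne := by simp [p.ne]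
  chain := List.isChain_append.mpr ⟨p.chain, q.chain, by
    intro x hx y hy
    rw [List.getLast?_eq_getLast p.ne, Option.mem_some_iff] at hx
    rw [List.head?_eq_head q.ne, Option.mem_some_iff] at hy
    subst hx; subst hy
    exact h⟩

lemma append_source (p q : GPath G) (h : p.range = q.source) :
    (p.append q h).source = p.source := by
  simp only [GPath.source, GPath.append]
  exact congrArg G.src (List.head_append_of_ne_nil p.ne)

lemma append_range (p q : GPath G) (h : p.range = q.source) :
    (p.append q h).range = q.range := by
  simp only [GPath.range, GPath.append]
  exact congrArg G.rng (List.getLast_append_of_ne_nil _ q.ne)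

lemma append_label (p q : GPath G) (h : p.range = q.source) :
    (p.append q h).label L = p.label L ++ q.label L := by
  simp [GPath.label, GPath.append]

lemma append_length (p q : GPath G) (h : p.range = q.source) :
    (p.append q h).length = p.length + q.length := by
  simp [GPath.length, GPath.append]

/-- Splitting a path at an intermediate position. -/
lemma split (p : GPath G) {k : ℕ} (h1 : 1 ≤ k) (h2 : k < p.length) :
    ∃ q r : GPath G, q.edges = p.edges.take k ∧ r.edges = p.edges.drop k ∧
      q.range = r.source ∧ q.source = p.source ∧ r.range = p.range := by
  have hlen : p.edges.length = p.length := rfl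
  have hq_ne : p.edges.take k ≠ [] := by
    intro h
    have := congrArg List.length h
    simp [hlen] at this
    omega
  have hr_ne : p.edges.drop k ≠ [] := by
    intro h
    have := congrArg List.length h
    simp [hlen] at this
    omega
  refine ⟨⟨p.edges.take k, hq_ne, p.chain.take k⟩, ⟨p.edges.drop k, hr_ne, p.chain.drop k⟩,
    rfl, rfl, ?_, ?_, ?_⟩
  · -- junction
    show G.rng ((p.edges.take k).getLast hq_ne) = G.src ((p.edges.drop k).head hr_ne)
    have hk1 : k - 1 < p.edges.length := by omega
    have h3 : (p.edges.take k).getLast hq_ne = p.edges[k-1] := by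
      rw [List.getLast_eq_getElem]
      have hlt : (p.edges.take k).length - 1 < k := by
        simp
        omega
      rw [List.getElem_take]
      congr 1
      simp
      omega
    have h4 : (p.edges.drop k).head hr_ne = p.edges[k] := List.head_drop hr_ne
    rw [h3, h4]
    have := List.isChain_iff_getElem.mp p.chain (k-1) (by simp [hlen]; omega)
    simp only [Nat.sub_add_cancel h1] at this
    exact this
  · show G.src ((p.edges.take k).head hq_ne) = G.src (p.edges.head p.ne)
    congr 1
    rw [List.head_eq_getElem, List.head_eq_getElem, List.getElem_take]
  · show G.rng ((p.edges.drop k).getLast hr_ne) = G.rng (p.edges.getLast p.ne)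
    congr 1
    rw [List.getLast_eq_getElem, List.getLast_eq_getElem, List.getElem_drop]
    congr 1
    simp
    omega

end GPath

end BbarDecompAux

section BbarDecompAux2

variable {V E 𝒜 : Type*} {G : DirGraph V E} {L : E → 𝒜}

/-- Every element of a set in `𝔅̄` is the range of an edge. -/
lemma Bbar.mem_isRange {A : Set V} (hA : Bbar G L A) {v : V} (hv : v ∈ A) :
    ∃ e, G.rng e = v := by
  induction hA generalizing v with
  | base w hw => obtain ⟨p, _, hp⟩ := hv; exact hp ▸ p.range_isRange
  | rel A w hA hw ih => obtain ⟨p, _, _, hp⟩ := hv; exact hp ▸ p.range_isRange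
  | inter A B hA hB ihA ihB => exact ihA hv.1
  | union A B hA hB ihA ihB => rcases hv with h | h; exacts [ihA h, ihB h]
  | diff A B hA hB ihA ihB => exact ihA hv.1
  | sk A hA ih => exact ih hv.1

lemma word_of_labelsToLe {l : ℕ} {u : V} {w : List 𝒜} (h : w ∈ labelsToLe G L l u) :
    IsLabelWord G L w ∧ w.length ≤ l := by
  obtain ⟨p, hr, hlen, hlab⟩ := h
  exact ⟨⟨p, hlab⟩, by rw [← hlab, p.label_length]; exact hlen⟩

lemma labelsToLe_subset_biUnion {A : Set V} {l : ℕ} {u : V} (hu : u ∈ A) :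
    labelsToLe G L l u ⊆ ⋃ n ∈ Finset.Icc 1 l, labelsToLen G L n A := by
  rintro w ⟨p, hr, hlen, hlab⟩
  refine Set.mem_biUnion (Finset.mem_Icc.mpr ⟨p.length_pos, hlen⟩) ⟨p, hr ▸ hu, rfl, hlab⟩

lemma finite_labels_biUnion (sa : StandingAssumptions G L) {A : Set V} (hA : Bbar G L A)
    (l : ℕ) : (⋃ n ∈ Finset.Icc 1 l, labelsToLen G L n A).Finite :=
  Set.Finite.biUnion (Finset.Icc 1 l).finite_toSet
    (fun n hn => sa.receiverSetFinite A hA n (Finset.mem_Icc.mp hn).1)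

/-- Finiteness of the family of `labelsToLe`-values on a set in `𝔅̄`. -/
lemma finClass (sa : StandingAssumptions G L) {A : Set V} (hA : Bbar G L A) (l : ℕ) :
    ((fun u => labelsToLe G L l u) '' A).Finite := by
  apply Set.Finite.subset (finite_labels_biUnion sa hA l).finite_subsets
  rintro S ⟨u, hu, rfl⟩
  exact labelsToLe_subset_biUnion hu

/-- `labelsToLe` at a lower level is recovered from any higher level. -/
lemma labelsToLe_eq_of_le {l l' : ℕ} (h : l ≤ l') (u : V) :
    labelsToLe G L l u = {w ∈ labelsToLe G L l' u | w.length ≤ l} := by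
  ext w
  constructor
  · rintro ⟨p, hr, hlen, hlab⟩
    exact ⟨⟨p, hr, le_trans hlen h, hlab⟩, by rw [← hlab, p.label_length]; exact hlen⟩
  · rintro ⟨⟨p, hr, hlen, hlab⟩, hwl⟩
    exact ⟨p, hr, by rw [← p.label_length (L := L), hlab]; exact hwl, hlab⟩

/-- Finite intersections of ranges `r(β)`. -/
def interW (G : DirGraph V E) (L : E → 𝒜) : List (List 𝒜) → Set V
  | [] => Set.univ
  | [β] => rngW G L β
  | β :: γ :: ws => rngW G L β ∩ interW G L (γ :: ws)

lemma mem_interW {x : V} : ∀ {ws : List (List 𝒜)},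
    x ∈ interW G L ws ↔ ∀ β ∈ ws, x ∈ rngW G L β
  | [] => by simp [interW]
  | [β] => by simp [interW]
  | β :: γ :: ws => by
      rw [interW, Set.mem_inter_iff, mem_interW (ws := γ :: ws)]
      simp_all only [List.mem_cons, forall_eq_or_imp]

lemma interW_Bbar : ∀ {ws : List (List 𝒜)}, ws ≠ [] → (∀ β ∈ ws, IsLabelWord G L β) →
    Bbar G L (interW G L ws)
  | [], h, _ => absurd rfl h
  | [β], _, hw => Bbar.base β (hw β (by simp))
  | β :: γ :: ws, _, hw =>
      Bbar.inter _ _ (Bbar.base β (hw β (by simp)))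
        (interW_Bbar (by simp) (fun δ hδ => hw δ (List.mem_cons_of_mem β hδ)))

lemma relRng_interW (sa : StandingAssumptions G L) {α : List 𝒜} (hα : IsLabelWord G L α)
    {u : V} : ∀ {ws : List (List 𝒜)}, ws ≠ [] → (∀ β ∈ ws, IsLabelWord G L β) →
    (∀ β ∈ ws, u ∈ relRng G L (rngW G L β) α) → u ∈ relRng G L (interW G L ws) α
  | [], h, _, _ => absurd rfl h
  | [β], _, _, hmem => by simpa [interW] using hmem β (by simp)
  | β :: γ :: ws, _, hw, hmem => by
      have h1 : u ∈ relRng G L (rngW G L β) α := hmem β (by simp)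
      have h2 : u ∈ relRng G L (interW G L (γ :: ws)) α :=
        relRng_interW sa hα (by simp) (fun δ hδ => hw δ (List.mem_cons_of_mem β hδ))
          (fun δ hδ => hmem δ (List.mem_cons_of_mem β hδ))
      have hwlr := sa.wlr (rngW G L β) (interW G L (γ :: ws)) (Bbar.base β (hw β (by simp)))
        (interW_Bbar (by simp) (fun δ hδ => hw δ (List.mem_cons_of_mem β hδ))) α hα
      rw [interW]
      exact hwlr ▸ Set.mem_inter h1 h2

end BbarDecompAux2

section BbarDecompAux3

variable {V E 𝒜 : Type*} {G : DirGraph V E} {L : E → 𝒜}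

lemma Bbar_empty {w : List 𝒜} (hw : IsLabelWord G L w) : Bbar G L (∅ : Set V) := by
  have := Bbar.diff _ _ (Bbar.base w hw) (Bbar.base w hw)
  simpa using this

lemma Bbar_biUnion {w₀ : List 𝒜} (hw₀ : IsLabelWord G L w₀) (S : Finset (List 𝒜))
    (h : ∀ β ∈ S, IsLabelWord G L β) : Bbar G L (⋃ β ∈ S, rngW G L β) := by
  classical
  induction S using Finset.induction with
  | empty => simpa using Bbar_empty hw₀
  | insert _ _ hx ih =>
      rw [Finset.set_biUnion_insert]
      exact Bbar.union _ _ (Bbar.base _ (h _ (Finset.mem_insert_self _ _)))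
        (ih (fun β hβ => h β (Finset.mem_insert_of_mem hβ)))

/-- The single-edge path. -/
def GPath.single (e : E) : GPath G := ⟨[e], by simp, List.isChain_singleton _⟩

lemma GPath.single_label (e : E) : (GPath.single (G := G) e).label L = [L e] := rfl
lemma GPath.single_range (e : E) : (GPath.single (G := G) e).range = G.rng e := rfl
lemma GPath.single_length (e : E) : (GPath.single (G := G) e).length = 1 := rfl

/-- Every generalized vertex `[v]_l` belongs to `𝔅̄`. -/
lemma gvtx_Bbar (sa : StandingAssumptions G L) {v : V} (hv : ∃ e, G.rng e = v) {l : ℕ}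
    (hl : 1 ≤ l) : Bbar G L (gvtx G L l v) := by
  classical
  obtain ⟨e, he⟩ := hv
  have hwe : IsLabelWord G L [L e] := ⟨GPath.single e, rfl⟩
  have hBe : Bbar G L (rngW G L [L e]) := Bbar.base _ hwe
  have hvmem : v ∈ rngW G L [L e] := ⟨GPath.single e, rfl, he⟩
  set F : Set (List 𝒜) := labelsToLe G L l v with hF
  have hF_fin : F.Finite :=
    Set.Finite.subset (finite_labels_biUnion sa hBe l) (labelsToLe_subset_biUnion hvmem)
  have heF : [L e] ∈ F := ⟨GPath.single e, he, by simpa [GPath.single_length] using hl, rfl⟩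
  set FL : List (List 𝒜) := hF_fin.toFinset.toList with hFL
  have hmemFL : ∀ β, β ∈ FL ↔ β ∈ F := by
    intro β; rw [hFL, Finset.mem_toList, Set.Finite.mem_toFinset]
  have hFL_ne : FL ≠ [] := by
    intro h
    have : [L e] ∈ FL := (hmemFL _).mpr heF
    rw [h] at this; exact List.not_mem_nil this
  have hFL_words : ∀ β ∈ FL, IsLabelWord G L β := fun β hβ =>
    (word_of_labelsToLe ((hmemFL β).mp hβ)).1
  set BF : Set V := interW G L FL with hBFdef
  have hBF : Bbar G L BF := interW_Bbar hFL_ne hFL_words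
  have hmemBF : ∀ x, x ∈ BF ↔ ∀ β ∈ F, x ∈ rngW G L β := by
    intro x
    rw [hBFdef, mem_interW]
    exact ⟨fun h β hβ => h β ((hmemFL β).mpr hβ), fun h β hβ => h β ((hmemFL β).mp hβ)⟩
  have hGfin : (⋃ n ∈ Finset.Icc 1 l, labelsToLen G L n BF).Finite :=
    finite_labels_biUnion sa hBF l
  set Gd : Finset (List 𝒜) := hGfin.toFinset \ hF_fin.toFinset with hGd
  set D : Set V := ⋃ β ∈ Gd, rngW G L β with hD
  have hGd_words : ∀ β ∈ Gd, IsLabelWord G L β := by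
    intro β hβ
    have : β ∈ ⋃ n ∈ Finset.Icc 1 l, labelsToLen G L n BF := by
      have := (Finset.mem_sdiff.mp hβ).1
      rwa [Set.Finite.mem_toFinset] at this
    rw [Set.mem_iUnion₂] at this
    obtain ⟨n, _, ⟨p, _, _, hlab⟩⟩ := this
    exact ⟨p, hlab⟩
  have hD_Bbar : Bbar G L D := Bbar_biUnion hwe Gd hGd_words
  -- word length bound for elements of F
  have hFlen : ∀ β ∈ F, β.length ≤ l := fun β hβ => (word_of_labelsToLe hβ).2
  -- the main set equality
  have hEq : gvtx G L l v = BF \ D := by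
    ext x
    constructor
    · rintro ⟨hΩ, hlab⟩
      refine ⟨(hmemBF x).mpr ?_, ?_⟩
      · intro β hβ
        have : β ∈ labelsToLe G L l x := hlab ▸ hβ
        obtain ⟨p, hr, _, hplab⟩ := this
        exact ⟨p, hplab, hr⟩
      · -- x ∉ D
        intro hxD
        rw [Set.mem_iUnion₂] at hxD
        obtain ⟨β, hβGd, ⟨p, hplab, hpr⟩⟩ := hxD
        have hβGfin : β ∈ ⋃ n ∈ Finset.Icc 1 l, labelsToLen G L n BF := by
          have := (Finset.mem_sdiff.mp hβGd).1
          rwa [Set.Finite.mem_toFinset] at this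
        have hβlen : β.length ≤ l := by
          rw [Set.mem_iUnion₂] at hβGfin
          obtain ⟨n, hn, ⟨q, _, hqlen, hqlab⟩⟩ := hβGfin
          have := (Finset.mem_Icc.mp hn).2
          rw [← hqlab, q.label_length]
          omega
        have hβF : β ∈ F := by
          rw [hF, ← hlab]
          exact ⟨p, hpr, by rw [← p.label_length (L := L), hplab]; exact hβlen, hplab⟩
        exact (Finset.mem_sdiff.mp hβGd).2 (hF_fin.mem_toFinset.mpr hβF)
    · rintro ⟨hxBF, hxD⟩
      have hlabsub : labelsToLe G L l x ⊆ F := by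
        intro β hβ
        obtain ⟨p, hr, hlen, hlab⟩ := hβ
        have hβGfin : β ∈ ⋃ n ∈ Finset.Icc 1 l, labelsToLen G L n BF := by
          refine Set.mem_biUnion (Finset.mem_Icc.mpr ⟨p.length_pos, hlen⟩)
            ⟨p, hr ▸ hxBF, rfl, hlab⟩
        by_contra hβF
        apply hxD
        refine Set.mem_biUnion (Finset.mem_sdiff.mpr
          ⟨hGfin.mem_toFinset.mpr hβGfin, fun h => hβF (hF_fin.mem_toFinset.mp h)⟩)
          ⟨p, hlab, hr⟩
      have hlabsup : F ⊆ labelsToLe G L l x := by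
        intro β hβ
        obtain ⟨p, hplab, hpr⟩ := (hmemBF x).mp hxBF β hβ
        exact ⟨p, hpr, by rw [← p.label_length (L := L), hplab]; exact hFlen β hβ, hplab⟩
      refine ⟨?_, le_antisymm hlabsub hlabsup⟩
      obtain ⟨p, _, hpr⟩ := (hmemBF x).mp hxBF [L e] heF
      exact hpr ▸ p.range_isRange
  rw [hEq]
  exact Bbar.diff _ _ hBF hD_Bbar

end BbarDecompAux3

section BbarDecompAux4

variable {V E 𝒜 : Type*} {G : DirGraph V E} {L : E → 𝒜}

/-- Saturation of a set with respect to `∼_l`-equivalence respecting sink status. -/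
def SatB (G : DirGraph V E) (L : E → 𝒜) (l : ℕ) (A : Set V) : Prop :=
  ∀ z ∈ A, ∀ u : V, (∃ e, G.rng e = u) → labelsToLe G L l u = labelsToLe G L l z →
    (u ∈ G.sinks ↔ z ∈ G.sinks) → u ∈ A

lemma SatB.mono {l l' : ℕ} (h : l ≤ l') {A : Set V} (hs : SatB G L l A) : SatB G L l' A := by
  intro z hz u hu hlab hsink
  refine hs z hz u hu ?_ hsink
  rw [labelsToLe_eq_of_le h u, labelsToLe_eq_of_le h z, hlab]

lemma relRng_empty (α : List 𝒜) : relRng G L (∅ : Set V) α = ∅ := by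
  ext x; simp [relRng]

lemma sat_rngW {w : List 𝒜} : SatB G L w.length (rngW G L w) := by
  rintro z ⟨p, hplab, hpr⟩ u hu hlab _
  have hw : w ∈ labelsToLe G L w.length z :=
    ⟨p, hpr, le_of_eq (by rw [← hplab, p.label_length]), hplab⟩
  rw [← hlab] at hw
  obtain ⟨q, hqr, _, hqlab⟩ := hw
  exact ⟨q, hqlab, hqr⟩

/-- From `β ++ α ∈ L(E^{≤l'} t)` one obtains `t ∈ r(r(β), α)`. -/
lemma split_relRng {β α : List 𝒜} (hβ : β ≠ []) (hα : 1 ≤ α.length) {l' : ℕ} {t : V}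
    (h : β ++ α ∈ labelsToLe G L l' t) : t ∈ relRng G L (rngW G L β) α := by
  obtain ⟨m, hmr, hmlen, hmlab⟩ := h
  have hmlen2 : m.edges.length = β.length + α.length := by
    have := m.label_length (L := L)
    rw [hmlab, List.length_append] at this
    exact this.symm
  have h1 : 1 ≤ β.length := List.length_pos_iff.mpr hβ
  have h2 : β.length < m.length := by
    show β.length < m.edges.length
    omega
  obtain ⟨q, r, hqe, hre, hjoin, hqs, hrr⟩ := m.split h1 h2
  have hmel : m.edges.map L = β ++ α := hmlab
  have hqlab : q.label L = β := by
    show q.edges.map L = β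
    rw [hqe, List.map_take, hmel]
    exact List.take_left
  have hrlab : r.label L = α := by
    show r.edges.map L = α
    rw [hre, List.map_drop, hmel]
    exact List.drop_left
  exact ⟨r, hrlab, ⟨q, hqlab, hjoin⟩, hrr ▸ hmr⟩

/-- The key saturation lemma for relative ranges. -/
lemma sat_relRng (sa : StandingAssumptions G L) {A : Set V} (hA : Bbar G L A) {l : ℕ}
    (hSat : SatB G L l A) (hl : 1 ≤ l) {α : List 𝒜} (hα : IsLabelWord G L α) :
    SatB G L (l + α.length) (relRng G L A α) := by
  classical
  intro z hz u hu hlab hsink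
  obtain ⟨lp, hlplab, hlps, hlpr⟩ := hz
  set x := lp.source with hxdef
  have hxA : x ∈ A := hlps
  have hxΩ : ∃ e, G.rng e = x := hA.mem_isRange hxA
  have hx_ns : x ∉ G.sinks := fun h => h (lp.edges.head lp.ne) rfl
  have hαpos : 1 ≤ α.length := by
    obtain ⟨p, hp⟩ := hα
    rw [← hp, p.label_length]; exact p.length_pos
  set l' := l + α.length with hl'def
  set F : Set (List 𝒜) := labelsToLe G L l x with hFdef
  have hF_fin : F.Finite :=
    Set.Finite.subset (finite_labels_biUnion sa hA l) (labelsToLe_subset_biUnion hxA)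
  obtain ⟨e, he⟩ := hxΩ
  have heF : [L e] ∈ F := ⟨GPath.single e, he, by simpa [GPath.single_length] using hl, rfl⟩
  set FL : List (List 𝒜) := hF_fin.toFinset.toList with hFLdef
  have hmemFL : ∀ β, β ∈ FL ↔ β ∈ F := by
    intro β; rw [hFLdef, Finset.mem_toList, Set.Finite.mem_toFinset]
  have hFL_ne : FL ≠ [] := by
    intro h
    have : [L e] ∈ FL := (hmemFL _).mpr heF
    rw [h] at this; exact List.not_mem_nil this
  have hFL_words : ∀ β ∈ FL, IsLabelWord G L β := fun β hβ =>
    (word_of_labelsToLe ((hmemFL β).mp hβ)).1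
  have hlplen : lp.length = α.length := by rw [← lp.label_length (L := L), hlplab]
  -- Step a: u ∈ r(r(β), α) for every β ∈ F
  have stepa : ∀ β ∈ F, u ∈ relRng G L (rngW G L β) α := by
    intro β hβ
    obtain ⟨ρ, hρr, hρlen, hρlab⟩ := hβ
    have hρne : β ≠ [] := hρlab ▸ ρ.label_ne_nil
    have hcomp : ρ.range = lp.source := hρr
    have hmem : β ++ α ∈ labelsToLe G L l' z := by
      refine ⟨ρ.append lp hcomp, by rw [ρ.append_range lp hcomp]; exact hlpr, ?_, ?_⟩
      · rw [ρ.append_length lp hcomp, hlplen]; omega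
      · rw [ρ.append_label lp hcomp, hρlab, hlplab]
    rw [← hlab] at hmem
    exact split_relRng hρne hαpos hmem
  -- Step b: a single path into u with source receiving all of F
  have stepb : u ∈ relRng G L (interW G L FL) α :=
    relRng_interW sa hα hFL_ne hFL_words (fun β hβ => stepa β ((hmemFL β).mp hβ))
  obtain ⟨μ, hμlab, hμs, hμr⟩ := stepb
  set y := μ.source with hydef
  have hyF : ∀ β ∈ F, y ∈ rngW G L β := by
    intro β hβ
    exact (mem_interW.mp hμs) β ((hmemFL β).mpr hβ)
  have hμlen : μ.length = α.length := by rw [← μ.label_length (L := L), hμlab]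
  -- Step c: the labels into y are exactly F
  have hyLab : labelsToLe G L l y = F := by
    apply le_antisymm
    · intro β' hβ'
      obtain ⟨ρ', hρ'r, hρ'len, hρ'lab⟩ := hβ'
      have hρ'ne : β' ≠ [] := hρ'lab ▸ ρ'.label_ne_nil
      have hβ'len : β'.length ≤ l := by rw [← hρ'lab, ρ'.label_length]; exact hρ'len
      have hcomp : ρ'.range = μ.source := hρ'r
      have hmem : β' ++ α ∈ labelsToLe G L l' u := by
        refine ⟨ρ'.append μ hcomp, by rw [ρ'.append_range μ hcomp]; exact hμr, ?_, ?_⟩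
        · rw [ρ'.append_length μ hcomp, hμlen]; omega
        · rw [ρ'.append_label μ hcomp, hρ'lab, hμlab]
      rw [hlab] at hmem
      have hzβ' : z ∈ relRng G L (rngW G L β') α := split_relRng hρ'ne hαpos hmem
      by_contra hβ'F
      have hdisj : gvtx G L l x ∩ rngW G L β' = (∅ : Set V) := by
        ext y'
        simp only [Set.mem_inter_iff, Set.mem_empty_iff_false, iff_false, not_and]
        rintro ⟨hy'Ω, hy'lab⟩ ⟨p, hplab, hpr⟩
        apply hβ'F
        rw [hFdef, ← hy'lab]
        exact ⟨p, hpr, by rw [← p.label_length (L := L), hplab]; exact hβ'len, hplab⟩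
      have hzg : z ∈ relRng G L (gvtx G L l x) α :=
        ⟨lp, hlplab, ⟨⟨e, he⟩, rfl⟩, hlpr⟩
      have hwlr := sa.wlr (gvtx G L l x) (rngW G L β') (gvtx_Bbar sa ⟨e, he⟩ hl)
        (Bbar.base β' ⟨ρ', hρ'lab⟩) α hα
      rw [hdisj, relRng_empty] at hwlr
      exact absurd (hwlr ▸ Set.mem_inter hzg hzβ') (Set.notMem_empty z)
    · intro β hβ
      obtain ⟨p, hplab, hpr⟩ := hyF β hβ
      have hβlen : β.length ≤ l := (word_of_labelsToLe hβ).2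
      exact ⟨p, hpr, by rw [← p.label_length (L := L), hplab]; exact hβlen, hplab⟩
  -- Step d: conclude via saturation of A
  have hyΩ : ∃ e', G.rng e' = y := by
    obtain ⟨p, _, hpr⟩ := hyF [L e] heF
    exact hpr ▸ p.range_isRange
  have hy_ns : y ∉ G.sinks := fun h => h (μ.edges.head μ.ne) rfl
  have hyA : y ∈ A := hSat x hxA y hyΩ hyLab (iff_of_false hy_ns hx_ns)
  exact ⟨μ, hμlab, hyA, hμr⟩

/-- Every set in `𝔅̄` is saturated at some level `l ≥ 1`. -/
lemma Bbar_sat (sa : StandingAssumptions G L) {A : Set V} (hA : Bbar G L A) :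
    ∃ l : ℕ, 1 ≤ l ∧ SatB G L l A := by
  induction hA with
  | base w hw =>
      refine ⟨w.length, ?_, sat_rngW⟩
      obtain ⟨p, hp⟩ := hw
      rw [← hp, p.label_length]; exact p.length_pos
  | rel A w hA hw ih =>
      obtain ⟨l, hl, hsat⟩ := ih
      have hwpos : 1 ≤ w.length := by
        obtain ⟨p, hp⟩ := hw
        rw [← hp, p.label_length]; exact p.length_pos
      exact ⟨l + w.length, by omega, sat_relRng sa hA hsat hl hw⟩
  | inter A B hA hB ihA ihB =>
      obtain ⟨l₁, hl₁, hs₁⟩ := ihA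
      obtain ⟨l₂, hl₂, hs₂⟩ := ihB
      refine ⟨max l₁ l₂, le_trans hl₁ (le_max_left _ _), ?_⟩
      intro z hz u hu hlab hsink
      exact ⟨hs₁.mono (le_max_left _ _) z hz.1 u hu hlab hsink,
        hs₂.mono (le_max_right _ _) z hz.2 u hu hlab hsink⟩
  | union A B hA hB ihA ihB =>
      obtain ⟨l₁, hl₁, hs₁⟩ := ihA
      obtain ⟨l₂, hl₂, hs₂⟩ := ihB
      refine ⟨max l₁ l₂, le_trans hl₁ (le_max_left _ _), ?_⟩
      intro z hz u hu hlab hsink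
      rcases hz with h | h
      · exact Or.inl (hs₁.mono (le_max_left _ _) z h u hu hlab hsink)
      · exact Or.inr (hs₂.mono (le_max_right _ _) z h u hu hlab hsink)
  | diff A B hA hB ihA ihB =>
      obtain ⟨l₁, hl₁, hs₁⟩ := ihA
      obtain ⟨l₂, hl₂, hs₂⟩ := ihB
      refine ⟨max l₁ l₂, le_trans hl₁ (le_max_left _ _), ?_⟩
      intro z hz u hu hlab hsink
      refine ⟨hs₁.mono (le_max_left _ _) z hz.1 u hu hlab hsink, fun huB => hz.2 ?_⟩
      exact hs₂.mono (le_max_right _ _) u huB z (hA.mem_isRange hz.1) hlab.symm hsink.symm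
  | sk A hA ih =>
      obtain ⟨l, hl, hs⟩ := ih
      exact ⟨l, hl, fun z hz u hu hlab hsink =>
        ⟨hs z hz.1 u hu hlab hsink, hsink.mpr hz.2⟩⟩

end BbarDecompAux4

section BbarDecompAux5

variable {V E 𝒜 : Type*} {G : DirGraph V E} {L : E → 𝒜}

lemma exists_reps {X Y : Type*} (f : X → Y) (P : Set X) (h : (f '' P).Finite) :
    ∃ S : Finset X, ↑S ⊆ P ∧ ∀ u ∈ P, ∃ u₀ ∈ S, f u₀ = f u := by
  classical
  have hch : ∀ y : h.toFinset, ∃ x, x ∈ P ∧ f x = (y : Y) := by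
    rintro ⟨y, hy⟩
    rw [Set.Finite.mem_toFinset] at hy
    obtain ⟨x, hx, rfl⟩ := hy
    exact ⟨x, hx, rfl⟩
  choose g hg1 hg2 using hch
  refine ⟨h.toFinset.attach.image g, ?_, ?_⟩
  · intro x hx
    rw [Finset.coe_image] at hx
    obtain ⟨y, _, rfl⟩ := hx
    exact hg1 y
  · intro u hu
    have hfu : f u ∈ h.toFinset := h.mem_toFinset.mpr ⟨u, hu, rfl⟩
    exact ⟨g ⟨f u, hfu⟩, Finset.mem_image.mpr ⟨⟨f u, hfu⟩, Finset.mem_attach _ _, rfl⟩,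
      hg2 ⟨f u, hfu⟩⟩

lemma biUnion_toList (S : Finset V) (f : V → Set V) :
    ⋃ u ∈ S, f u = ⋃ i : Fin S.toList.length, f (S.toList.get i) := by
  ext x
  simp only [Set.mem_iUnion, exists_prop]
  constructor
  · rintro ⟨u, hu, hx⟩
    obtain ⟨i, hi⟩ := List.mem_iff_get.mp (Finset.mem_toList.mpr hu)
    exact ⟨i, hi ▸ hx⟩
  · rintro ⟨i, hx⟩
    exact ⟨S.toList.get i, Finset.mem_toList.mp (S.toList.get_mem _), hx⟩

/-- The decomposition theorem, Finset version. -/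
lemma Bbar_decomp_finset (sa : StandingAssumptions G L) {A : Set V} (hA : Bbar G L A) :
    ∃ (l : ℕ) (S₂ S₃ : Finset V), 1 ≤ l ∧ ↑S₂ ⊆ A ∧ ↑S₃ ⊆ A ∧
      (∀ u ∈ S₂, u ∈ G.sinks) ∧ (∀ u ∈ S₃, u ∉ G.sinks) ∧
      A = (⋃ u ∈ S₂, gvtx G L l u ∩ G.sinks) ∪ (⋃ u ∈ S₃, gvtx G L l u \ G.sinks) := by
  classical
  obtain ⟨l, hl, hsat⟩ := Bbar_sat sa hA
  set f : V → Set (List 𝒜) × Prop := fun u => (labelsToLe G L l u, u ∈ G.sinks) with hfdef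
  have himage : (f '' A).Finite := by
    apply Set.Finite.subset (Set.Finite.prod (finClass sa hA l) (Set.finite_univ (α := Prop)))
    rintro y ⟨u, hu, rfl⟩
    exact ⟨⟨u, hu, rfl⟩, Set.mem_univ _⟩
  obtain ⟨S, hS_sub, hS_rep⟩ := exists_reps f A himage
  refine ⟨l, S.filter (fun u => u ∈ G.sinks), S.filter (fun u => u ∉ G.sinks), hl, ?_, ?_,
    ?_, ?_, ?_⟩
  · intro u hu
    exact hS_sub (Finset.filter_subset _ _ (by exact_mod_cast hu))
  · intro u hu
    exact hS_sub (Finset.filter_subset _ _ (by exact_mod_cast hu))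
  · intro u hu; exact (Finset.mem_filter.mp hu).2
  · intro u hu; exact (Finset.mem_filter.mp hu).2
  · ext z
    constructor
    · intro hz
      obtain ⟨u₀, hu₀S, hf⟩ := hS_rep z hz
      have hlabeq : labelsToLe G L l u₀ = labelsToLe G L l z := congrArg Prod.fst hf
      have hsinkeq : (u₀ ∈ G.sinks) = (z ∈ G.sinks) := congrArg Prod.snd hf
      have hzΩ : ∃ e, G.rng e = z := hA.mem_isRange hz
      by_cases hzs : z ∈ G.sinks
      · refine Or.inl (Set.mem_biUnion (Finset.mem_filter.mpr ⟨hu₀S, hsinkeq ▸ hzs⟩) ?_)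
        exact ⟨⟨hzΩ, hlabeq.symm⟩, hzs⟩
      · refine Or.inr (Set.mem_biUnion (Finset.mem_filter.mpr ⟨hu₀S, hsinkeq ▸ hzs⟩) ?_)
        exact ⟨⟨hzΩ, hlabeq.symm⟩, hzs⟩
    · rintro (hz | hz)
      · rw [Set.mem_iUnion₂] at hz
        obtain ⟨u₀, hu₀, ⟨⟨hzΩ, hzlab⟩, hzs⟩⟩ := hz
        have hu₀S : u₀ ∈ S := Finset.filter_subset _ _ hu₀
        have hu₀s : u₀ ∈ G.sinks := (Finset.mem_filter.mp hu₀).2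
        exact hsat u₀ (hS_sub hu₀S) z hzΩ hzlab (iff_of_true hzs hu₀s)
      · rw [Set.mem_iUnion₂] at hz
        obtain ⟨u₀, hu₀, ⟨⟨hzΩ, hzlab⟩, hzs⟩⟩ := hz
        have hu₀S : u₀ ∈ S := Finset.filter_subset _ _ hu₀
        have hu₀s : u₀ ∉ G.sinks := (Finset.mem_filter.mp hu₀).2
        exact hsat u₀ (hS_sub hu₀S) z hzΩ hzlab (iff_of_false hzs hu₀s)

end BbarDecompAux5


/-- Proposition 2.2. Every set `A ∈ 𝔅̄` is a finite union of
generalized vertices `[v]_l`, sink parts `([u]_l)_sk` and non-sink parts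
`[w]_l ∖ ([w]_l)_sk`, for vertices in `Ω₀(E)` and some `l ≥ 1`. -/
theorem Bbar_decomposition {V E 𝒜 : Type*} [Countable V] [Countable E] [Countable 𝒜]
    (G : DirGraph V E) (L : E → 𝒜) (hL : Function.Surjective L)
    (sa : StandingAssumptions G L) (A : Set V) (hA : Bbar G L A) :
    ∃ (l n₁ n₂ n₃ : ℕ) (vs : Fin n₁ → V) (us : Fin n₂ → V) (ws : Fin n₃ → V),
      1 ≤ l ∧
      (∀ i, ∃ e, G.rng e = vs i) ∧
      (∀ j, ∃ e, G.rng e = us j) ∧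
      (∀ k, ∃ e, G.rng e = ws k) ∧
      A = (⋃ i, gvtx G L l (vs i)) ∪ (⋃ j, gvtx G L l (us j) ∩ G.sinks) ∪
          (⋃ k, gvtx G L l (ws k) \ G.sinks) := by
  obtain ⟨l, S₂, S₃, hl, hS₂A, hS₃A, _, _, hEq⟩ := Bbar_decomp_finset sa hA
  refine ⟨l, 0, S₂.toList.length, S₃.toList.length, Fin.elim0,
    fun j => S₂.toList.get j, fun k => S₃.toList.get k, hl,
    fun i => i.elim0, ?_, ?_, ?_⟩
  · intro j
    exact hA.mem_isRange (hS₂A (Finset.mem_toList.mp (S₂.toList.get_mem _)))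
  · intro k
    exact hA.mem_isRange (hS₃A (Finset.mem_toList.mp (S₃.toList.get_mem _)))
  · rw [Set.iUnion_of_empty, Set.empty_union, ← biUnion_toList S₂ (fun u => gvtx G L l u ∩ G.sinks),
      ← biUnion_toList S₃ (fun u => gvtx G L l u \ G.sinks)]
    exact hEq

end
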